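/- Let C be a linear subspace of ℝ^o with orthogonal projection matrix P_c. Given a key matrix U ∈ ℝ^{i×n} with UUᵀ invertible and value matrix V ∈ ℝ^{o×n}, the matrix Ŵ = (I − P_c) V Uᵀ (U Uᵀ)⁻¹ minimizes ‖WU − V‖_F² among all W ∈ ℝ^{o×i} satisfying W u_j ⊥ C for every column u_j of U. -/
import Mathlib


open Matrix BigOperators

/-- Squared Frobenius norm of a matrix. -/
def frobSq {m n : ℕ} (A : Matrix (Fin m) (Fin n) ℝ) : ℝ := ∑ i, ∑ j, (A i j) ^ 2

lemma frobSq_eq_trace {m n : ℕ} (A : Matrix (Fin m) (Fin n) ℝ) :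
    frobSq A = (A * Aᵀ).trace := by
  simp [frobSq, Matrix.trace, Matrix.diag, Matrix.mul_apply, sq]

lemma frobSq_nonneg {m n : ℕ} (A : Matrix (Fin m) (Fin n) ℝ) : 0 ≤ frobSq A := by
  refine Finset.sum_nonneg fun _ _ => Finset.sum_nonneg fun _ _ => ?_
  positivity

theorem dama_constrained_ols
    {i n o : ℕ}
    (P : Matrix (Fin o) (Fin o) ℝ)
    (hPsym : Pᵀ = P) (hPidem : P * P = P)
    (U : Matrix (Fin i) (Fin n) ℝ)
    (hU : IsUnit (U * Uᵀ))
    (V : Matrix (Fin o) (Fin n) ℝ) :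
    (∀ j : Fin n, P.mulVec (((1 - P) * V * Uᵀ * (U * Uᵀ)⁻¹).mulVec (fun k => U k j)) = 0) ∧
    (∀ W : Matrix (Fin o) (Fin i) ℝ,
      (∀ j : Fin n, P.mulVec (W.mulVec (fun k => U k j)) = 0) →
      frobSq ((1 - P) * V * Uᵀ * (U * Uᵀ)⁻¹ * U - V) ≤ frobSq (W * U - V)) := by
  have hdet : IsUnit (U * Uᵀ).det := (Matrix.isUnit_iff_isUnit_det _).mp hU
  have hinv : (U * Uᵀ) * (U * Uᵀ)⁻¹ = 1 := Matrix.mul_nonsing_inv _ hdet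
  have hinv' : (U * Uᵀ)⁻¹ * (U * Uᵀ) = 1 := Matrix.nonsing_inv_mul _ hdet
  set Wh : Matrix (Fin o) (Fin i) ℝ := (1 - P) * V * Uᵀ * (U * Uᵀ)⁻¹ with hWh
  have hP1P : P * (1 - P) = 0 := by
    rw [Matrix.mul_sub, Matrix.mul_one, hPidem, sub_self]
  have hPWh : P * Wh = 0 := by
    rw [hWh]
    simp only [← Matrix.mul_assoc]
    rw [hP1P, Matrix.zero_mul, Matrix.zero_mul, Matrix.zero_mul]
  constructor
  · intro j
    rw [Matrix.mulVec_mulVec, hPWh, Matrix.zero_mulVec]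
  · intro W hW
    have hPWU : P * W * U = 0 := by
      ext a j
      have h := congrFun (hW j) a
      rw [Matrix.mulVec_mulVec] at h
      simpa [Matrix.mulVec, Matrix.mul_apply, dotProduct] using h
    have hPWhU : P * Wh * U = 0 := by rw [hPWh, Matrix.zero_mul]
    set Q : Matrix (Fin n) (Fin n) ℝ := Uᵀ * (U * Uᵀ)⁻¹ * U with hQdef
    have hUQ : U * Q = U := by
      rw [hQdef]
      simp only [← Matrix.mul_assoc]
      rw [hinv, Matrix.one_mul]
    have hQsym : Qᵀ = Q := by
      rw [hQdef]
      simp [Matrix.transpose_mul, Matrix.transpose_nonsing_inv, Matrix.mul_assoc]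
    have hWhU : Wh * U = (1 - P) * V * Q := by
      rw [hWh, hQdef]
      simp only [Matrix.mul_assoc]
    have hB : Wh * U - V = (1 - P) * V * (Q - 1) - P * V := by
      rw [hWhU]
      simp only [Matrix.mul_sub, Matrix.sub_mul, Matrix.mul_one, Matrix.one_mul]
      abel
    have hDU : (W - Wh) * U * (Q - 1) = 0 := by
      rw [Matrix.mul_sub, Matrix.mul_one, Matrix.mul_assoc, hUQ, sub_self]
    have hPDU : P * ((W - Wh) * U) = 0 := by
      rw [← Matrix.mul_assoc, Matrix.mul_sub, Matrix.sub_mul, hPWU, hPWhU, sub_self]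
    have hBt : (Wh * U - V)ᵀ = (Q - 1) * Vᵀ * (1 - P) - Vᵀ * P := by
      rw [hB]
      simp [Matrix.transpose_sub, Matrix.transpose_mul, hQsym, hPsym, Matrix.mul_assoc]
    have h1 : (W - Wh) * U * ((Q - 1) * Vᵀ * (1 - P)) = 0 := by
      simp only [← Matrix.mul_assoc]
      rw [hDU, Matrix.zero_mul, Matrix.zero_mul]
    have h2 : ((W - Wh) * U * (Vᵀ * P)).trace = 0 := by
      rw [← Matrix.mul_assoc, Matrix.trace_mul_comm, ← Matrix.mul_assoc, hPDU,
        Matrix.zero_mul, Matrix.trace_zero]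
    have hcross : ((W - Wh) * U * (Wh * U - V)ᵀ).trace = 0 := by
      rw [hBt, Matrix.mul_sub, Matrix.trace_sub, h1, h2, Matrix.trace_zero, sub_self]
    have hsplit : W * U - V = (Wh * U - V) + (W - Wh) * U := by
      rw [Matrix.sub_mul]; abel
    have key : frobSq (W * U - V) =
        frobSq (Wh * U - V) + frobSq ((W - Wh) * U) := by
      rw [frobSq_eq_trace, frobSq_eq_trace, frobSq_eq_trace, hsplit]
      set B := Wh * U - V with hBdef
      set D := (W - Wh) * U with hDdef
      have hDB : (D * Bᵀ).trace = 0 := hcross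
      have hBD : (B * Dᵀ).trace = 0 := by
        rw [← Matrix.trace_transpose, Matrix.transpose_mul, Matrix.transpose_transpose]
        exact hDB
      rw [Matrix.add_mul, Matrix.transpose_add, Matrix.mul_add, Matrix.mul_add,
        Matrix.trace_add, Matrix.trace_add, Matrix.trace_add, hBD, hDB]
      ring
    rw [key]
    linarith [frobSq_nonneg ((W - Wh) * U)]
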